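/- Let h : |Δ| → ℚ be a support map on a fan Δ in a lattice N. If there are linear forms u_σ on N_ℚ, one for each σ ∈ Δ, such that for every pair σ, τ ∈ Δ one has h|_σ = u_σ|_σ and h|_τ ≤ u_σ|_τ, then h is a convex support map on Δ. Conversely, if Δ is complete (i.e. |Δ| = N_ℚ) and h is convex, then h or −h satisfies the above condition. -/

import Mathlib

/-! Convex geometry over ℚ: polyhedral cones, quasifans, fans, support maps. -/

namespace ToricQuot

variable {E V : Type} [AddCommGroup E] [Module ℚ E] [AddCommGroup V] [Module ℚ V]

/-- The convex cone generated by a set: all finite nonnegative rational combinations. -/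
def coneHull (s : Set E) : Set E :=
  {x | ∃ (m : ℕ) (c : Fin m → ℚ) (v : Fin m → E),
    (∀ i, 0 ≤ c i) ∧ (∀ i, v i ∈ s) ∧ x = ∑ i, c i • v i}

/-- A (rational) polyhedral convex cone: the conic hull of a finite set. -/
def IsPolyCone (σ : Set E) : Prop := ∃ s : Set E, s.Finite ∧ σ = coneHull s

/-- `F` is a face of the cone `σ`: it is cut out of `σ` by a supporting linear form. -/
def IsFaceOf (F σ : Set E) : Prop :=
  ∃ u : E →ₗ[ℚ] ℚ, (∀ x ∈ σ, 0 ≤ u x) ∧ F = {x ∈ σ | u x = 0}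

/-- The relative interior of a cone: points not lying on any proper face. -/
def relint (σ : Set E) : Set E :=
  {x ∈ σ | ∀ F, IsFaceOf F σ → x ∈ F → F = σ}

/-- A quasifan: a finite set of polyhedral cones, closed under taking faces, such that
the intersection of any two of its cones is a face of each. -/
def IsQuasifan (Λ : Set (Set E)) : Prop :=
  Λ.Finite ∧ (∀ σ ∈ Λ, IsPolyCone σ) ∧
  (∀ σ ∈ Λ, ∀ F, IsFaceOf F σ → F ∈ Λ) ∧
  (∀ σ ∈ Λ, ∀ τ ∈ Λ, IsFaceOf (σ ∩ τ) σ)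

/-- A cone is strictly convex (pointed) if it contains no line. -/
def IsPointed (σ : Set E) : Prop := σ ∩ (-σ) ⊆ {0}

/-- A fan: a quasifan all of whose cones are strictly convex. -/
def IsFan (Λ : Set (Set E)) : Prop := IsQuasifan Λ ∧ ∀ σ ∈ Λ, IsPointed σ

/-- The support of a quasifan. -/
def fanSupp (Λ : Set (Set E)) : Set E := ⋃₀ Λ

/-- A support map on a quasifan `Δ`: a map that is linear on every cone of `Δ`. -/
def IsSupportMap (Δ : Set (Set E)) (h : E → V) : Prop :=
  ∀ σ ∈ Δ, ∃ L : E →ₗ[ℚ] V, ∀ x ∈ σ, h x = L x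

/-- The graph of a support map over the support of the quasifan. -/
def graphOf (Δ : Set (Set E)) (h : E → V) : Set (E × V) :=
  {p | ∃ v ∈ fanSupp Δ, p = (v, h v)}

/-- The cone generated by the graph of a support map. -/
def gammaCone (Δ : Set (Set E)) (h : E → V) : Set (E × V) := coneHull (graphOf Δ h)

/-- The filled graph `Λ_h`: the minimal subquasifan of the face quasifan of `γ` whose
support contains the graph, i.e. it is generated by the faces of `γ` whose relative
interior meets the graph. -/
def filledGraph (Δ : Set (Set E)) (h : E → V) : Set (Set (E × V)) :=
  {δ | ∃ δ', IsFaceOf δ' (gammaCone Δ h) ∧ (relint δ' ∩ graphOf Δ h).Nonempty ∧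
    IsFaceOf δ δ'}

/-- A support map is convex if the projection to the first factor is injective on the
support of the filled graph. -/
def IsConvexSM (Δ : Set (Set E)) (h : E → V) : Prop :=
  IsSupportMap Δ h ∧ Set.InjOn (Prod.fst : E × V → E) (⋃₀ filledGraph Δ h)

/-- The quasifan `Σ_h` associated to a convex support map: the projections of the cones
of the filled graph. -/
def sigmaFan (Δ : Set (Set E)) (h : E → V) : Set (Set E) :=
  (Set.image (Prod.fst : E × V → E)) '' filledGraph Δ h

/-- A strictly convex support map. -/
def IsStrictlyConvexSM (Δ : Set (Set E)) (h : E → V) : Prop :=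
  IsConvexSM Δ h ∧ sigmaFan Δ h = Δ


end ToricQuot

namespace ToricQuot

variable {E V : Type} [AddCommGroup E] [Module ℚ E] [AddCommGroup V] [Module ℚ V]

lemma subset_coneHull (s : Set E) : s ⊆ coneHull s := by
  intro x hx
  exact ⟨1, fun _ => 1, fun _ => x, fun _ => zero_le_one, fun _ => hx, by simp⟩

lemma zero_mem_coneHull (s : Set E) : (0 : E) ∈ coneHull s := by
  exact ⟨0, fun i => 0, fun i => i.elim0, fun i => i.elim0, fun i => i.elim0, by simp⟩

lemma coneHull_add {s : Set E} {x y : E} (hx : x ∈ coneHull s) (hy : y ∈ coneHull s) :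
    x + y ∈ coneHull s := by
  obtain ⟨m, c, v, hc, hv, rfl⟩ := hx
  obtain ⟨m', c', v', hc', hv', rfl⟩ := hy
  refine ⟨m + m', Fin.addCases c c', Fin.addCases v v', ?_, ?_, ?_⟩
  · intro i; refine Fin.addCases (fun j => ?_) (fun j => ?_) i <;> simp [hc, hc']
  · intro i; refine Fin.addCases (fun j => ?_) (fun j => ?_) i <;> simp [hv, hv']
  · rw [Fin.sum_univ_add]; simp

lemma coneHull_smul {s : Set E} {a : ℚ} {x : E} (ha : 0 ≤ a) (hx : x ∈ coneHull s) :
    a • x ∈ coneHull s := by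
  obtain ⟨m, c, v, hc, hv, rfl⟩ := hx
  exact ⟨m, fun i => a * c i, v, fun i => mul_nonneg ha (hc i),
    hv, by rw [Finset.smul_sum]; simp [mul_smul]⟩

lemma sum_mem_coneHull {ι : Type*} {s : Set E} (t : Finset ι) (c : ι → ℚ) (v : ι → E)
    (hc : ∀ i ∈ t, 0 ≤ c i) (hv : ∀ i ∈ t, v i ∈ s) :
    (∑ i ∈ t, c i • v i) ∈ coneHull s := by
  classical
  induction t using Finset.induction_on with
  | empty => simpa using zero_mem_coneHull s
  | @insert a t ha ih =>
    rw [Finset.sum_insert ha]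
    exact coneHull_add
      (coneHull_smul (hc a (Finset.mem_insert_self a t)) (subset_coneHull s (hv a (Finset.mem_insert_self a t))))
      (ih (fun i hi => hc i (Finset.mem_insert_of_mem hi)) (fun i hi => hv i (Finset.mem_insert_of_mem hi)))

lemma coneHull_mono {s t : Set E} (h : s ⊆ t) : coneHull s ⊆ coneHull t := by
  rintro x ⟨m, c, v, hc, hv, rfl⟩
  exact ⟨m, c, v, hc, fun i => h (hv i), rfl⟩

lemma sum_smul_mem_coneHull {ι : Type*} {s : Set E} (t : Finset ι) (c : ι → ℚ) (v : ι → E)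
    (hc : ∀ i ∈ t, 0 ≤ c i) (hv : ∀ i ∈ t, v i ∈ coneHull s) :
    (∑ i ∈ t, c i • v i) ∈ coneHull s := by
  classical
  induction t using Finset.induction_on with
  | empty => simpa using zero_mem_coneHull s
  | @insert a t ha ih =>
    rw [Finset.sum_insert ha]
    exact coneHull_add
      (coneHull_smul (hc a (Finset.mem_insert_self a t)) (hv a (Finset.mem_insert_self a t)))
      (ih (fun i hi => hc i (Finset.mem_insert_of_mem hi)) (fun i hi => hv i (Finset.mem_insert_of_mem hi)))

lemma coneHull_subset_coneHull {s t : Set E} (h : s ⊆ coneHull t) :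
    coneHull s ⊆ coneHull t := by
  rintro x ⟨m, c, v, hc, hv, rfl⟩
  exact sum_smul_mem_coneHull Finset.univ c v (fun i _ => hc i) (fun i _ => h (hv i))

lemma apply_coneHull_nonneg {s : Set E} (u : E →ₗ[ℚ] ℚ) (hu : ∀ v ∈ s, 0 ≤ u v) :
    ∀ x ∈ coneHull s, 0 ≤ u x := by
  rintro x ⟨m, c, v, hc, hv, rfl⟩
  rw [map_sum]
  exact Finset.sum_nonneg fun i _ => by
    rw [map_smul, smul_eq_mul]; exact mul_nonneg (hc i) (hu _ (hv i))


lemma apply_sum_eq (u : E →ₗ[ℚ] ℚ) {m : ℕ} (c : Fin m → ℚ) (v : Fin m → E) :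
    u (∑ i, c i • v i) = ∑ i, c i * u (v i) := by
  rw [map_sum]; simp [smul_eq_mul]

lemma isFaceOf_refl (σ : Set E) : IsFaceOf σ σ := by
  refine ⟨0, by simp, ?_⟩
  ext x; simp

lemma IsFaceOf.subset {F σ : Set E} (h : IsFaceOf F σ) : F ⊆ σ := by
  obtain ⟨u, hu, rfl⟩ := h
  exact fun x hx => hx.1

/-- A face of a conical hull cut out by `u` equals the hull of the generators killed by `u`. -/
lemma face_coneHull_eq {s : Set E} (u : E →ₗ[ℚ] ℚ) (hu : ∀ v ∈ s, 0 ≤ u v) :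
    {x ∈ coneHull s | u x = 0} = coneHull {v ∈ s | u v = 0} := by
  ext x
  constructor
  · rintro ⟨⟨m, c, v, hc, hv, rfl⟩, hx0⟩
    rw [apply_sum_eq] at hx0
    have hterm : ∀ i ∈ Finset.univ, c i * u (v i) = 0 :=
      (Finset.sum_eq_zero_iff_of_nonneg (fun i _ => mul_nonneg (hc i) (hu _ (hv i)))).1 hx0
    have : ∑ i, c i • v i = ∑ i ∈ Finset.univ.filter (fun i => u (v i) = 0), c i • v i := by
      rw [Finset.sum_filter]
      refine Finset.sum_congr rfl fun i _ => ?_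
      by_cases hui : u (v i) = 0
      · simp [hui]
      · have : c i = 0 := by
          have := hterm i (Finset.mem_univ i)
          rcases mul_eq_zero.1 this with h' | h'
          · exact h'
          · exact absurd h' hui
        simp [hui, this]
    rw [this]
    exact sum_mem_coneHull _ c v (fun i _ => hc i)
      (fun i hi => ⟨hv i, (Finset.mem_filter.1 hi).2⟩)
  · intro hx
    refine ⟨coneHull_mono (fun v hv => hv.1) hx, ?_⟩
    obtain ⟨m, c, v, hc, hv, rfl⟩ := hx
    rw [apply_sum_eq]
    exact Finset.sum_eq_zero fun i _ => by rw [(hv i).2, mul_zero]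

/-- If `x` is in the relative interior of `σ` and a supporting form vanishes at `x`,
it vanishes on all of `σ`. -/
lemma relint_zero {σ : Set E} {x : E} (hx : x ∈ relint σ) (u : E →ₗ[ℚ] ℚ)
    (hu : ∀ y ∈ σ, 0 ≤ u y) (h0 : u x = 0) : ∀ y ∈ σ, u y = 0 := by
  have hface : IsFaceOf {y ∈ σ | u y = 0} σ := ⟨u, hu, rfl⟩
  have := hx.2 _ hface ⟨hx.1, h0⟩
  intro y hy
  rw [← this] at hy
  exact hy.2

/-- A face of a face of a finitely generated cone is a face of the cone. -/
lemma isFaceOf_trans {s : Set E} (hs : s.Finite) {F G : Set E}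
    (hGF : IsFaceOf G F) (hF : IsFaceOf F (coneHull s)) : IsFaceOf G (coneHull s) := by
  classical
  obtain ⟨u, hu, rfl⟩ := hF
  obtain ⟨w, hw, rfl⟩ := hGF
  set M : ℚ := 1 + ∑ v ∈ hs.toFinset, |w v / u v| with hM
  have hMv : ∀ v ∈ s, 0 < u v → 0 < w v + M * u v := by
    intro v hv huv
    have h1 : -(w v) / u v ≤ |w v / u v| := by
      rw [neg_div]; exact neg_le_abs _
    have h2 : |w v / u v| ≤ ∑ v' ∈ hs.toFinset, |w v' / u v'| :=
      Finset.single_le_sum (f := fun v' => |w v' / u v'|) (fun i _ => abs_nonneg _) (hs.mem_toFinset.2 hv)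
    have h3 : -(w v) / u v < M := by
      calc -(w v) / u v ≤ |w v / u v| := h1
        _ ≤ ∑ v' ∈ hs.toFinset, |w v' / u v'| := h2
        _ < M := by rw [hM]; linarith
    have := (div_lt_iff₀ huv).1 h3
    linarith
  set z : E →ₗ[ℚ] ℚ := w + M • u with hz
  have hzv : ∀ v ∈ s, 0 ≤ z v := by
    intro v hv
    have hvγ : v ∈ coneHull s := subset_coneHull s hv
    rcases lt_or_eq_of_le (hu v hvγ) with huv | huv
    · exact le_of_lt (by simpa [hz, smul_eq_mul] using hMv v hv huv)
    · have hvF : v ∈ {x ∈ coneHull s | u x = 0} := ⟨hvγ, huv.symm⟩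
      have := hw v hvF
      simp [hz, smul_eq_mul, ← huv]
      linarith
  refine ⟨z, apply_coneHull_nonneg z hzv, ?_⟩
  ext x
  constructor
  · rintro ⟨⟨hxγ, hxu⟩, hxw⟩
    exact ⟨hxγ, by simp [hz, smul_eq_mul, hxu, hxw]⟩
  · rintro ⟨hxγ, hxz⟩
    obtain ⟨m, c, v, hc, hv, rfl⟩ := hxγ
    have hsum : ∑ i, c i * z (v i) = 0 := by rw [← apply_sum_eq]; exact hxz
    have hterm : ∀ i ∈ Finset.univ, c i * z (v i) = 0 :=
      (Finset.sum_eq_zero_iff_of_nonneg (fun i _ => mul_nonneg (hc i) (hzv _ (hv i)))).1 hsum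
    -- for each i: c i = 0 or (u (v i) = 0 and w (v i) = 0)
    have hkey : ∀ i, c i = 0 ∨ (u (v i) = 0 ∧ w (v i) = 0) := by
      intro i
      rcases mul_eq_zero.1 (hterm i (Finset.mem_univ i)) with h' | h'
      · exact Or.inl h'
      · right
        have hvγ : v i ∈ coneHull s := subset_coneHull s (hv i)
        rcases lt_or_eq_of_le (hu _ hvγ) with huv | huv
        · exact absurd h' (ne_of_gt (by simpa [hz, smul_eq_mul] using hMv _ (hv i) huv))
        · have hwv := hw _ ⟨hvγ, huv.symm⟩
          have : w (v i) = 0 := by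
            have : w (v i) + M * u (v i) = 0 := by simpa [hz, smul_eq_mul] using h'
            rw [← huv] at this; linarith
          exact ⟨huv.symm, this⟩
    have hxu : u (∑ i, c i • v i) = 0 := by
      rw [apply_sum_eq]
      refine Finset.sum_eq_zero fun i _ => ?_
      rcases hkey i with h' | ⟨h1, h2⟩
      · simp [h']
      · simp [h1]
    have hxw : w (∑ i, c i • v i) = 0 := by
      rw [apply_sum_eq]
      refine Finset.sum_eq_zero fun i _ => ?_
      rcases hkey i with h' | ⟨h1, h2⟩
      · simp [h']
      · simp [h2]
    exact ⟨⟨⟨m, c, v, hc, hv, rfl⟩, hxu⟩, hxw⟩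


/-- Every point of a finitely generated cone lies in the relative interior of a face. -/
lemma exists_relint_face [FiniteDimensional ℚ E] {s : Set E} (hs : s.Finite) {p : E}
    (hp : p ∈ coneHull s) :
    ∃ F, IsFaceOf F (coneHull s) ∧ p ∈ relint F := by
  classical
  set A : Set ℕ := {k | ∃ F, IsFaceOf F (coneHull s) ∧ p ∈ F ∧
    Module.finrank ℚ (Submodule.span ℚ F) = k} with hA
  have hAne : A.Nonempty := ⟨_, coneHull s, isFaceOf_refl _, hp, rfl⟩
  obtain ⟨F, hF, hpF, hrk⟩ := Nat.sInf_mem hAne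
  refine ⟨F, hF, hpF, ?_⟩
  intro G hGF hpG
  by_contra hne
  have hGγ : IsFaceOf G (coneHull s) := isFaceOf_trans hs hGF hF
  -- span G < span F
  obtain ⟨w, hw, hGeq⟩ := hGF
  have hGsubF : G ⊆ F := by rw [hGeq]; exact fun x hx => hx.1
  have hy : ∃ y ∈ F, w y ≠ 0 := by
    by_contra hcon
    push_neg at hcon
    apply hne
    rw [hGeq]
    ext x; exact ⟨fun hx => hx.1, fun hx => ⟨hx, hcon x hx⟩⟩
  obtain ⟨y, hyF, hwy⟩ := hy
  have hspan : Submodule.span ℚ G < Submodule.span ℚ F := by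
    refine lt_of_le_of_ne (Submodule.span_mono hGsubF) ?_
    intro heq
    have hGker : Submodule.span ℚ G ≤ LinearMap.ker w := by
      rw [Submodule.span_le]
      intro x hx
      have := hGeq ▸ hx
      exact LinearMap.mem_ker.2 this.2
    have : y ∈ Submodule.span ℚ G := heq ▸ Submodule.subset_span hyF
    exact hwy (LinearMap.mem_ker.1 (hGker this))
  have hlt : Module.finrank ℚ (Submodule.span ℚ G) < Module.finrank ℚ (Submodule.span ℚ F) :=
    Submodule.finrank_lt_finrank_of_lt hspan
  have : Module.finrank ℚ (Submodule.span ℚ G) ∈ A := ⟨G, hGγ, hpG, rfl⟩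
  have := Nat.sInf_le this
  omega

/-- The relative interior of a finitely generated cone is nonempty. -/
lemma relint_nonempty {s : Set E} (hs : s.Finite) : (relint (coneHull s)).Nonempty := by
  classical
  -- the set of faces is finite
  have hfaces : {F | IsFaceOf F (coneHull s)}.Finite := by
    have : {F | IsFaceOf F (coneHull s)} ⊆ coneHull '' {t | t ⊆ s} := by
      rintro F ⟨u, hu, rfl⟩
      exact ⟨{v ∈ s | u v = 0}, fun v hv => hv.1,
        (face_coneHull_eq u (fun v hv => hu v (subset_coneHull s hv))).symm⟩
    exact Set.Finite.subset (Set.Finite.image _ hs.finite_subsets) this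
  have hproper : {F | IsFaceOf F (coneHull s) ∧ F ≠ coneHull s}.Finite :=
    hfaces.subset (fun F hF => hF.1)
  -- choose witnesses
  have hwit : ∀ F ∈ {F | IsFaceOf F (coneHull s) ∧ F ≠ coneHull s},
      ∃ y, y ∈ coneHull s ∧ y ∉ F := by
    rintro F ⟨⟨u, hu, rfl⟩, hne⟩
    by_contra hcon
    push_neg at hcon
    exact hne (Set.Subset.antisymm (fun x hx => hx.1) hcon)
  choose! yw hyw using hwit
  set y : E := ∑ F ∈ hproper.toFinset, yw F with hy
  have hymem : y ∈ coneHull s := by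
    have hy1 : y = ∑ F ∈ hproper.toFinset, (1:ℚ) • yw F := by simp [hy]
    rw [hy1]
    exact sum_smul_mem_coneHull _ _ _ (fun i _ => zero_le_one)
      (fun F hF => (hyw F (hproper.mem_toFinset.1 hF)).1)
  refine ⟨y, hymem, ?_⟩
  intro G hG hyG
  by_contra hne
  have hGmem : G ∈ hproper.toFinset := hproper.mem_toFinset.2 ⟨hG, hne⟩
  obtain ⟨u, hu, hGeq⟩ := hG
  have huy : u y = 0 := by
    have := hGeq ▸ hyG
    exact this.2
  have hsum : u y = ∑ F ∈ hproper.toFinset, u (yw F) := by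
    rw [hy, map_sum]
  have hterms : ∀ F ∈ hproper.toFinset, 0 ≤ u (yw F) := fun F hF =>
    hu _ (hyw F (hproper.mem_toFinset.1 hF)).1
  have hGterm : u (yw G) = 0 := by
    have h0 : ∀ F ∈ hproper.toFinset, u (yw F) = 0 := by
      rw [hsum] at huy
      exact (Finset.sum_eq_zero_iff_of_nonneg hterms).1 huy
    exact h0 G hGmem
  have : yw G ∈ G :=
    (Set.ext_iff.1 hGeq (yw G)).2 ⟨(hyw G (hproper.mem_toFinset.1 hGmem)).1, hGterm⟩
  exact (hyw G (hproper.mem_toFinset.1 hGmem)).2 this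

lemma sigma_subset_fanSupp {Δ : Set (Set E)} {σ : Set E} (hσ : σ ∈ Δ) : σ ⊆ fanSupp Δ :=
  Set.subset_sUnion_of_mem hσ

lemma mem_graphOf {Δ : Set (Set E)} {h : E → V} {v : E} (hv : v ∈ fanSupp Δ) :
    (v, h v) ∈ graphOf Δ h := ⟨v, hv, rfl⟩

lemma graphOf_subset_gamma {Δ : Set (Set E)} {h : E → V} :
    graphOf Δ h ⊆ gammaCone Δ h := subset_coneHull _

/-- The cone over the graph of a support map on a quasifan is finitely generated. -/
lemma gamma_fin_gen {Δ : Set (Set E)} {h : E → V} (hfin : Δ.Finite)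
    (hpoly : ∀ σ ∈ Δ, IsPolyCone σ) (hsm : IsSupportMap Δ h) :
    ∃ G : Set (E × V), G.Finite ∧ G ⊆ graphOf Δ h ∧ gammaCone Δ h = coneHull G := by
  classical
  choose! sσ hsσ using hpoly
  set G : Set (E × V) := ⋃ σ ∈ Δ, (fun v => (v, h v)) '' sσ σ with hG
  have hGfin : G.Finite := Set.Finite.biUnion hfin (fun σ hσ => ((hsσ σ hσ).1.image _))
  have hsub : ∀ σ ∈ Δ, sσ σ ⊆ σ := by
    intro σ hσ v hv
    rw [(hsσ σ hσ).2]
    exact subset_coneHull _ hv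
  have hGgraph : G ⊆ graphOf Δ h := by
    rintro p hp
    simp only [hG, Set.mem_iUnion] at hp
    obtain ⟨σ, hσ, v, hv, rfl⟩ := hp
    exact mem_graphOf (sigma_subset_fanSupp hσ (hsub σ hσ hv))
  refine ⟨G, hGfin, hGgraph, ?_⟩
  apply Set.Subset.antisymm
  · apply coneHull_subset_coneHull
    rintro p ⟨v, hv, rfl⟩
    obtain ⟨σ, hσ, hvσ⟩ := hv
    obtain ⟨L, hL⟩ := hsm σ hσ
    have hvc : v ∈ coneHull (sσ σ) := by rw [← (hsσ σ hσ).2]; exact hvσ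
    obtain ⟨m, c, w, hc, hw, hveq⟩ := hvc
    refine ⟨m, c, fun i => (w i, h (w i)), hc, ?_, ?_⟩
    · intro i
      simp only [hG, Set.mem_iUnion]
      exact ⟨σ, hσ, w i, hw i, rfl⟩
    · have hL2 : ∀ i, h (w i) = L (w i) := fun i => hL _ (hsub σ hσ (hw i))
      have hhv : h v = L v := hL v hvσ
      refine Prod.ext ?_ ?_
      · simpa [Prod.fst_sum] using hveq
      · simp only [Prod.snd_sum, Prod.smul_snd]
        rw [hhv, hveq, map_sum]
        refine Finset.sum_congr rfl fun i _ => ?_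
        rw [map_smul, hL2]
  · apply coneHull_subset_coneHull
    exact fun p hp => graphOf_subset_gamma (hGgraph hp)

lemma face_mem_filledGraph {Δ : Set (Set E)} {h : E → V} {F : Set (E × V)}
    (hF : IsFaceOf F (gammaCone Δ h)) (hne : (relint F ∩ graphOf Δ h).Nonempty) :
    F ∈ filledGraph Δ h := ⟨F, hF, hne, isFaceOf_refl F⟩

lemma graph_subset_filled [FiniteDimensional ℚ E] [FiniteDimensional ℚ V]
    {Δ : Set (Set E)} {h : E → V} (hfin : Δ.Finite)
    (hpoly : ∀ σ ∈ Δ, IsPolyCone σ) (hsm : IsSupportMap Δ h) :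
    graphOf Δ h ⊆ ⋃₀ filledGraph Δ h := by
  obtain ⟨G, hGfin, hGgraph, hGeq⟩ := gamma_fin_gen hfin hpoly hsm
  intro p hp
  have hpγ : p ∈ coneHull G := by rw [← hGeq]; exact graphOf_subset_gamma hp
  obtain ⟨F, hF, hpF⟩ := exists_relint_face hGfin hpγ
  have hFγ : IsFaceOf F (gammaCone Δ h) := by rw [hGeq]; exact hF
  exact ⟨F, face_mem_filledGraph hFγ ⟨p, hpF, hp⟩, hpF.1⟩

/-- For a complete fan and convex support map, the support of the filled graph is
exactly the graph. -/
lemma filled_eq_graph [FiniteDimensional ℚ E] [FiniteDimensional ℚ V]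
    {Δ : Set (Set E)} {h : E → V} (hfin : Δ.Finite)
    (hpoly : ∀ σ ∈ Δ, IsPolyCone σ) (hsm : IsSupportMap Δ h)
    (hcomp : fanSupp Δ = Set.univ)
    (hinj : Set.InjOn (Prod.fst : E × V → E) (⋃₀ filledGraph Δ h)) :
    ⋃₀ filledGraph Δ h = graphOf Δ h := by
  apply Set.Subset.antisymm
  · intro p hp
    have hq : (p.1, h p.1) ∈ graphOf Δ h := mem_graphOf (by rw [hcomp]; trivial)
    have hqS : (p.1, h p.1) ∈ ⋃₀ filledGraph Δ h := graph_subset_filled hfin hpoly hsm hq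
    have : p = (p.1, h p.1) := hinj hp hqS rfl
    rw [this]; exact hq
  · exact graph_subset_filled hfin hpoly hsm

/-- Part 1: existence of supporting linear forms implies convexity. -/
lemma part1 {Δ : Set (Set E)} {h : E → ℚ} (hsm : IsSupportMap Δ h)
    (hu : ∀ σ ∈ Δ, ∃ u : E →ₗ[ℚ] ℚ,
      (∀ x ∈ σ, h x = u x) ∧ (∀ τ ∈ Δ, ∀ x ∈ τ, h x ≤ u x)) :
    IsConvexSM Δ h := by
  classical
  choose! U hU1 hU2 using hu
  have hW : ∀ σ ∈ Δ, ∀ z ∈ gammaCone Δ h,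
      0 ≤ ((U σ).comp (LinearMap.fst ℚ E ℚ) - LinearMap.snd ℚ E ℚ) z := by
    intro σ hσ
    apply apply_coneHull_nonneg
    rintro z ⟨v, hv, rfl⟩
    obtain ⟨τ, hτ, hvτ⟩ := hv
    have := hU2 σ hσ τ hτ v hvτ
    simp only [LinearMap.sub_apply, LinearMap.comp_apply, LinearMap.fst_apply,
      LinearMap.snd_apply]
    linarith
  have key : ∀ p ∈ ⋃₀ filledGraph Δ h,
      p ∈ gammaCone Δ h ∧ ∃ σ ∈ Δ, p.2 = U σ p.1 := by
    rintro p ⟨δ, ⟨δ', hδ'face, ⟨z, hzr, hzg⟩, hδface⟩, hpδ⟩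
    have hpδ' : p ∈ δ' := hδface.subset hpδ
    have hδ'γ : δ' ⊆ gammaCone Δ h := hδ'face.subset
    obtain ⟨v, hv, rfl⟩ := hzg
    obtain ⟨σ, hσ, hvσ⟩ := hv
    set w := (U σ).comp (LinearMap.fst ℚ E ℚ) - LinearMap.snd ℚ E ℚ with hw
    have hwδ' : ∀ y ∈ δ', 0 ≤ w y := fun y hy => hW σ hσ y (hδ'γ hy)
    have hw0 : w (v, h v) = 0 := by
      simp only [hw, LinearMap.sub_apply, LinearMap.comp_apply, LinearMap.fst_apply,
        LinearMap.snd_apply]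
      rw [hU1 σ hσ v hvσ]; ring
    have hall := relint_zero hzr w hwδ' hw0
    have hwp : w p = 0 := hall p hpδ'
    refine ⟨hδ'γ hpδ', σ, hσ, ?_⟩
    simp only [hw, LinearMap.sub_apply, LinearMap.comp_apply, LinearMap.fst_apply,
      LinearMap.snd_apply] at hwp
    linarith
  refine ⟨hsm, ?_⟩
  intro p hp q hq hfst
  obtain ⟨hpγ, σp, hσp, hp2⟩ := key p hp
  obtain ⟨hqγ, σq, hσq, hq2⟩ := key q hq
  have h1 : 0 ≤ (U σp) q.1 - q.2 := by
    have := hW σp hσp q hqγ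
    simpa using this
  have h2 : 0 ≤ (U σq) p.1 - p.2 := by
    have := hW σq hσq p hpγ
    simpa using this
  have : p.2 = q.2 := by
    rw [hp2, hq2] at *
    rw [hfst] at *
    linarith
  exact Prod.ext hfst this

/-- Decomposition of a linear form on `E × ℚ`. -/
lemma form_decomp (w : (E × ℚ) →ₗ[ℚ] ℚ) (x : E) (t : ℚ) :
    w (x, t) = w (x, 0) + t * w (0, 1) := by
  have : (x, t) = (x, (0:ℚ)) + t • ((0:E), (1:ℚ)) := by
    simp [Prod.ext_iff]
  rw [this, map_add, map_smul, smul_eq_mul]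

/-- Step B: for each cone of a complete fan with convex support map, there is a
supporting affine form. -/
lemma stepB [FiniteDimensional ℚ E] {Δ : Set (Set E)} {h : E → ℚ}
    (hfin : Δ.Finite) (hpoly : ∀ σ ∈ Δ, IsPolyCone σ) (hsm : IsSupportMap Δ h)
    (hcomp : fanSupp Δ = Set.univ)
    (hinj : Set.InjOn (Prod.fst : E × ℚ → E) (⋃₀ filledGraph Δ h))
    {σ : Set E} (hσ : σ ∈ Δ) :
    ∃ (φ : E →ₗ[ℚ] ℚ) (c : ℚ), (∀ v ∈ σ, φ v + c * h v = 0) ∧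
      (∀ v : E, 0 ≤ φ v + c * h v) ∧
      (c = 0 → ∃ L : E →ₗ[ℚ] ℚ, ∀ v, h v = L v) := by
  classical
  -- a relative interior point of σ
  obtain ⟨s, hsfin, hseq⟩ := hpoly σ hσ
  obtain ⟨v₀, hv₀⟩ : (relint σ).Nonempty := by rw [hseq]; exact relint_nonempty hsfin
  have hv₀σ : v₀ ∈ σ := hv₀.1
  -- the face of γ containing (v₀, h v₀) in its relative interior
  obtain ⟨G, hGfin, hGgraph, hGeq⟩ := gamma_fin_gen hfin hpoly hsm
  have hp₀graph : ((v₀ : E), h v₀) ∈ graphOf Δ h :=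
    mem_graphOf (sigma_subset_fanSupp hσ hv₀σ)
  have hp₀γ : ((v₀ : E), h v₀) ∈ coneHull G := by
    rw [← hGeq]; exact graphOf_subset_gamma hp₀graph
  obtain ⟨F, hFface, hp₀F⟩ := exists_relint_face hGfin hp₀γ
  obtain ⟨w, hwγ, hFeq⟩ := hFface
  -- decompose w
  set φ : E →ₗ[ℚ] ℚ := w.comp (LinearMap.inl ℚ E ℚ) with hφ
  set c : ℚ := w (0, 1) with hc
  have hdec : ∀ (x : E) (t : ℚ), w (x, t) = φ x + c * t := by
    intro x t
    rw [form_decomp w x t]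
    simp [hφ, hc, mul_comm]
  -- nonnegativity everywhere (completeness)
  have hpos : ∀ v : E, 0 ≤ φ v + c * h v := by
    intro v
    have hvγ : ((v : E), h v) ∈ coneHull G := by
      rw [← hGeq]
      exact graphOf_subset_gamma (mem_graphOf (by rw [hcomp]; trivial))
    have := hwγ _ hvγ
    rwa [hdec] at this
  -- w vanishes at p₀
  have hwp₀ : w (v₀, h v₀) = 0 := by
    have : ((v₀ : E), h v₀) ∈ {x ∈ coneHull G | w x = 0} := by
      rw [← hFeq]; exact hp₀F.1
    exact this.2
  -- vanishing on σ via relint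
  obtain ⟨L, hL⟩ := hsm σ hσ
  have heqσ : ∀ v ∈ σ, φ v + c * h v = 0 := by
    set ψ : E →ₗ[ℚ] ℚ := φ + c • L with hψ
    have hψval : ∀ v ∈ σ, ψ v = φ v + c * h v := by
      intro v hv
      simp [hψ, smul_eq_mul, hL v hv]
    have hψnn : ∀ v ∈ σ, 0 ≤ ψ v := fun v hv => (hψval v hv).symm ▸ hpos v
    have hψ0 : ψ v₀ = 0 := by
      rw [hψval v₀ hv₀σ]
      have := hwp₀
      rwa [hdec] at this
    have := relint_zero hv₀ ψ hψnn hψ0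
    intro v hv
    rw [← hψval v hv]
    exact this v hv
  refine ⟨φ, c, heqσ, hpos, ?_⟩
  -- degenerate case: c = 0 forces h to be linear
  intro hc0
  have hφ0 : ∀ v : E, φ v = 0 := by
    intro v
    have h1 := hpos v
    have h2 := hpos (-v)
    rw [hc0] at h1 h2
    simp only [mul_comm, zero_mul, mul_zero, add_zero] at h1 h2
    rw [map_neg] at h2
    linarith
  have hw0 : ∀ q : E × ℚ, w q = 0 := by
    intro q
    have : w (q.1, q.2) = φ q.1 + c * q.2 := hdec q.1 q.2
    rw [hc0, hφ0] at this
    simpa using this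
  have hFγ : F = coneHull G := by
    rw [hFeq]
    ext q
    exact ⟨fun hq => hq.1, fun hq => ⟨hq, hw0 q⟩⟩
  -- so γ ∈ filledGraph, hence γ ⊆ graph
  have hγfill : gammaCone Δ h ∈ filledGraph Δ h := by
    refine face_mem_filledGraph (isFaceOf_refl _) ⟨(v₀, h v₀), ?_, hp₀graph⟩
    rw [hGeq, ← hFγ]
    exact hp₀F
  have hγgraph : gammaCone Δ h ⊆ graphOf Δ h := by
    have hS := filled_eq_graph hfin hpoly hsm hcomp hinj
    intro q hq
    rw [← hS]
    exact ⟨_, hγfill, hq⟩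
  -- h is additive and positively homogeneous, hence linear
  have hmemγ : ∀ v : E, ((v : E), h v) ∈ gammaCone Δ h := fun v =>
    graphOf_subset_gamma (mem_graphOf (by rw [hcomp]; trivial))
  have hgr : ∀ q : E × ℚ, q ∈ gammaCone Δ h → q.2 = h q.1 := by
    intro q hq
    obtain ⟨v, _, rfl⟩ := hγgraph hq
    rfl
  have hadd : ∀ x y : E, h (x + y) = h x + h y := by
    intro x y
    have := hgr (x + y, h x + h y) (coneHull_add (hmemγ x) (hmemγ y))
    exact this.symm
  have hhom : ∀ a : ℚ, 0 ≤ a → ∀ x : E, h (a • x) = a * h x := by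
    intro a ha x
    have hm : (a • x, a * h x) ∈ gammaCone Δ h := by
      have := coneHull_smul ha (hmemγ x)
      simpa [Prod.smul_mk, smul_eq_mul, gammaCone] using this
    exact (hgr _ hm).symm
  have h0 : h 0 = 0 := by
    have := hhom 0 le_rfl 0
    simpa using this
  have hneg : ∀ x : E, h (-x) = - h x := by
    intro x
    have := hadd x (-x)
    rw [add_neg_cancel, h0] at this
    linarith
  refine ⟨{ toFun := h, map_add' := hadd, map_smul' := ?_ }, fun v => rfl⟩
  intro a x
  simp only [RingHom.id_apply, smul_eq_mul]
  rcases le_or_gt 0 a with ha | ha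
  · exact hhom a ha x
  · have h1 : h (a • x) = - h (-(a • x)) := by rw [hneg]; ring
    rw [h1, ← neg_smul]
    rw [hhom (-a) (by linarith) x]
    ring

lemma div_ineq_pos {P C t : ℚ} (h : 0 ≤ P + C * t) (hC : 0 < C) : -C⁻¹ * P ≤ t := by
  have h1 : 0 < C⁻¹ := inv_pos.2 hC
  have h2 : 0 ≤ C⁻¹ * (P + C * t) := mul_nonneg h1.le h
  have h3 : C⁻¹ * (P + C * t) = C⁻¹ * P + t := by field_simp
  linarith

lemma div_ineq_neg {P C t : ℚ} (h : 0 ≤ P + C * t) (hC : C < 0) : t ≤ -C⁻¹ * P := by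
  have h1 : 0 < -C⁻¹ := by
    rw [neg_pos]
    exact inv_lt_zero.2 hC
  have h2 : 0 ≤ (-C⁻¹) * (P + C * t) := mul_nonneg h1.le h
  have h3 : (-C⁻¹) * (P + C * t) = -C⁻¹ * P - t := by
    have h4 : C⁻¹ * C = 1 := inv_mul_cancel₀ (ne_of_lt hC)
    linear_combination (-t) * h4
  linarith

lemma div_eq_of {P C t : ℚ} (h : P + C * t = 0) (hC : C ≠ 0) : t = -C⁻¹ * P := by
  have h3 : C⁻¹ * (P + C * t) = C⁻¹ * P + t := by field_simp
  rw [h, mul_zero] at h3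
  linarith

/-- Part 2: completeness and convexity give the supporting forms for `h` or `-h`. -/
lemma part2 [FiniteDimensional ℚ E] {Δ : Set (Set E)} {h : E → ℚ}
    (hfin : Δ.Finite) (hpoly : ∀ σ ∈ Δ, IsPolyCone σ) (hsm : IsSupportMap Δ h)
    (hcomp : fanSupp Δ = Set.univ) (hconv : IsConvexSM Δ h) :
    (∀ σ ∈ Δ, ∃ u : E →ₗ[ℚ] ℚ,
        (∀ x ∈ σ, h x = u x) ∧ (∀ τ ∈ Δ, ∀ x ∈ τ, h x ≤ u x)) ∨
    (∀ σ ∈ Δ, ∃ u : E →ₗ[ℚ] ℚ,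
        (∀ x ∈ σ, -h x = u x) ∧ (∀ τ ∈ Δ, ∀ x ∈ τ, -h x ≤ u x)) := by
  classical
  have hinj := hconv.2
  by_cases hlin : ∃ L : E →ₗ[ℚ] ℚ, ∀ v, h v = L v
  · obtain ⟨L, hL⟩ := hlin
    exact Or.inl fun σ hσ => ⟨L, fun x _ => hL x, fun τ _ x _ => le_of_eq (hL x)⟩
  · have hstep : ∀ σ ∈ Δ, ∃ (φ : E →ₗ[ℚ] ℚ) (c : ℚ),
        (∀ v ∈ σ, φ v + c * h v = 0) ∧ (∀ v : E, 0 ≤ φ v + c * h v) ∧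
        (c = 0 → ∃ L : E →ₗ[ℚ] ℚ, ∀ v, h v = L v) :=
      fun σ hσ => stepB hfin hpoly hsm hcomp hinj hσ
    choose! Φ C hC1 hC2 hC3 using hstep
    have hCne : ∀ σ ∈ Δ, C σ ≠ 0 := fun σ hσ hc0 => hlin (hC3 σ hσ hc0)
    by_cases hex : ∃ σ₀ ∈ Δ, 0 < C σ₀
    · obtain ⟨σ₀, hσ₀, hCσ₀⟩ := hex
      -- all signs must be positive, otherwise h is linear
      have hallpos : ∀ τ ∈ Δ, 0 < C τ := by
        intro τ hτ
        rcases lt_trichotomy (C τ) 0 with hneg | h0 | hpos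
        · exfalso
          apply hlin
          set u1 : E →ₗ[ℚ] ℚ := (-(C σ₀)⁻¹) • Φ σ₀ with hu1
          set u2 : E →ₗ[ℚ] ℚ := (-(C τ)⁻¹) • Φ τ with hu2
          have hlow : ∀ v, u1 v ≤ h v := by
            intro v
            have := div_ineq_pos (hC2 σ₀ hσ₀ v) hCσ₀
            simpa [hu1, smul_eq_mul] using this
          have hhigh : ∀ v, h v ≤ u2 v := by
            intro v
            have := div_ineq_neg (hC2 τ hτ v) hneg
            simpa [hu2, smul_eq_mul] using this
          have heq : ∀ v, u1 v = u2 v := by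
            intro v
            have ha : 0 ≤ u2 v - u1 v := by linarith [hlow v, hhigh v]
            have hb : 0 ≤ u2 (-v) - u1 (-v) := by linarith [hlow (-v), hhigh (-v)]
            rw [map_neg, map_neg] at hb
            linarith
          exact ⟨u1, fun v => le_antisymm (by rw [heq v]; exact hhigh v) (hlow v)⟩
        · exact absurd h0 (hCne τ hτ)
        · exact hpos
      refine Or.inr fun σ hσ => ?_
      refine ⟨(C σ)⁻¹ • Φ σ, ?_, ?_⟩
      · intro x hx
        have := div_eq_of (hC1 σ hσ x hx) (hCne σ hσ)
        simp only [LinearMap.smul_apply, smul_eq_mul]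
        linarith
      · intro τ hτ x hx
        have := div_ineq_pos (hC2 σ hσ x) (hallpos σ hσ)
        simp only [LinearMap.smul_apply, smul_eq_mul]
        linarith
    · push_neg at hex
      have hallneg : ∀ τ ∈ Δ, C τ < 0 := fun τ hτ =>
        lt_of_le_of_ne (hex τ hτ) (hCne τ hτ)
      refine Or.inl fun σ hσ => ?_
      refine ⟨(-(C σ)⁻¹) • Φ σ, ?_, ?_⟩
      · intro x hx
        have := div_eq_of (hC1 σ hσ x hx) (hCne σ hσ)
        simp only [LinearMap.smul_apply, smul_eq_mul]
        linarith
      · intro τ hτ x hx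
        have := div_ineq_neg (hC2 σ hσ x) (hallneg σ hσ)
        simp only [LinearMap.smul_apply, smul_eq_mul]
        linarith

end ToricQuot

open ToricQuot in
/-- **Remark 2.3.** Let `h : |Δ| → ℚ` be a support map on a fan `Δ`. If there are linear
forms `u_σ`, `σ ∈ Δ`, on `N_ℚ` such that for any pair `σ, τ ∈ Δ` we have
`h|_σ = u_σ|_σ` and `h|_τ ≤ u_σ|_τ`, then `h` is a convex support map on `Δ`.
Conversely, if `Δ` is complete and `h` is convex, then `h` or `-h` satisfies the above
condition. -/
theorem convex_support_function_criterion (n : ℕ) (Δ : Set (Set (Fin n → ℚ)))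
    (h : (Fin n → ℚ) → ℚ) (hΔ : IsFan Δ) (hsm : IsSupportMap Δ h) :
    ((∀ σ ∈ Δ, ∃ u : (Fin n → ℚ) →ₗ[ℚ] ℚ,
        (∀ x ∈ σ, h x = u x) ∧ (∀ τ ∈ Δ, ∀ x ∈ τ, h x ≤ u x)) →
      IsConvexSM Δ h) ∧
    (fanSupp Δ = Set.univ → IsConvexSM Δ h →
      (∀ σ ∈ Δ, ∃ u : (Fin n → ℚ) →ₗ[ℚ] ℚ,
        (∀ x ∈ σ, h x = u x) ∧ (∀ τ ∈ Δ, ∀ x ∈ τ, h x ≤ u x)) ∨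
      (∀ σ ∈ Δ, ∃ u : (Fin n → ℚ) →ₗ[ℚ] ℚ,
        (∀ x ∈ σ, -h x = u x) ∧ (∀ τ ∈ Δ, ∀ x ∈ τ, -h x ≤ u x))) := by
  obtain ⟨⟨hfin, hpoly, hfaces, hinter⟩, hpointed⟩ := hΔ
  constructor
  · exact fun hu => part1 hsm hu
  · intro hcomp hconv
    exact part2 hfin hpoly hsm hcomp hconv
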